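/- Let λ ∈ ℝ and let β₁ ≥ β₂ > 0 satisfy λ²/4 ≤ β₂. Let μ⁽ʲ⁾ = λ/2 + (i/2)√(4βⱼ - λ²) for j = 1,2. Then |μ⁽¹⁾ - μ⁽²⁾| ≤ √β₁ = |μ⁽¹⁾|. -/

import Mathlib

open Complex

theorem stmt15 (lam β₁ β₂ : ℝ) (h21 : β₂ ≤ β₁) (h2 : 0 < β₂)
    (hlam : lam ^ 2 / 4 ≤ β₂) :
    let μ₁ : ℂ := lam / 2 + (Complex.I / 2) * Real.sqrt (4 * β₁ - lam ^ 2)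
    let μ₂ : ℂ := lam / 2 + (Complex.I / 2) * Real.sqrt (4 * β₂ - lam ^ 2)
    ‖μ₁ - μ₂‖ ≤ Real.sqrt β₁ ∧
    ‖μ₁‖ = Real.sqrt β₁ := by
  intro μ₁ μ₂
  set s₁ : ℝ := Real.sqrt (4 * β₁ - lam ^ 2) with hs₁
  set s₂ : ℝ := Real.sqrt (4 * β₂ - lam ^ 2) with hs₂
  have h2nn : (0:ℝ) ≤ 4 * β₂ - lam ^ 2 := by nlinarith
  have h1nn : (0:ℝ) ≤ 4 * β₁ - lam ^ 2 := by nlinarith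
  have hs₁nn : 0 ≤ s₁ := Real.sqrt_nonneg _
  have hs₂nn : 0 ≤ s₂ := Real.sqrt_nonneg _
  have hs₁sq : s₁ ^ 2 = 4 * β₁ - lam ^ 2 := Real.sq_sqrt h1nn
  have hs₂sq : s₂ ^ 2 = 4 * β₂ - lam ^ 2 := Real.sq_sqrt h2nn
  have hs12 : s₂ ≤ s₁ := Real.sqrt_le_sqrt (by nlinarith)
  constructor
  · have hdiff : μ₁ - μ₂ = (Complex.I / 2) * ((s₁ : ℂ) - s₂) := by
      simp only [μ₁, μ₂]; ring
    rw [hdiff, norm_mul]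
    have : ‖Complex.I / 2‖ = 1 / 2 := by
      simp [map_div₀]
    rw [this]
    have : ‖(s₁ : ℂ) - s₂‖ = s₁ - s₂ := by
      rw [← Complex.ofReal_sub, Complex.norm_real, Real.norm_eq_abs]
      exact abs_of_nonneg (by linarith)
    rw [this]
    rw [← Real.sqrt_sq (by linarith : (0:ℝ) ≤ 1 / 2 * (s₁ - s₂))]
    apply Real.sqrt_le_sqrt
    nlinarith
  · have h1 : μ₁ = Complex.mk (lam / 2) (s₁ / 2) := by
      apply Complex.ext <;> simp [μ₁, ← hs₁] <;> ring
    rw [h1, Complex.norm_def, Complex.normSq_mk]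
    rw [show lam / 2 * (lam / 2) + s₁ / 2 * (s₁ / 2) = β₁ by nlinarith]
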